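/- Let σ(s) = 1/(1 + e^{−s}) denote the logistic function. For every ε ∈ (0, 1], define g_ε : ℝ → ℝ by g_ε(x) = log σ( 2ε sin(x/√ε) ). Then g_ε is twice continuously differentiable and for every x ∈ ℝ: |g_ε'(x)| ≤ 2 and |g_ε''(x)| ≤ 3. -/

import Mathlib

/-- The logistic (sigmoid) function. -/
noncomputable def logistic (s : ℝ) : ℝ := (1 + Real.exp (-s))⁻¹

/-- The log-probability assigned to the target label by the classifier of the
sharpness construction. -/
noncomputable def gEps (ε : ℝ) (x : ℝ) : ℝ :=
  Real.log (logistic (2 * ε * Real.sin (x / Real.sqrt ε)))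

noncomputable def Faux (t : ℝ) : ℝ := -Real.log (1 + Real.exp (-t))
noncomputable def Faux' (t : ℝ) : ℝ := Real.exp (-t) / (1 + Real.exp (-t))
noncomputable def Faux'' (t : ℝ) : ℝ := -(Real.exp (-t)) / (1 + Real.exp (-t)) ^ 2

lemma aux_pos (t : ℝ) : (0:ℝ) < 1 + Real.exp (-t) := by positivity

lemma hFaux (t : ℝ) : HasDerivAt Faux (Faux' t) t := by
  have h1 : HasDerivAt (fun t : ℝ => Real.exp (-t)) (-Real.exp (-t)) t := by
    have := (Real.hasDerivAt_exp (-t)).comp t (hasDerivAt_neg t)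
    simp only [mul_neg, mul_one] at this
    exact this
  have h2 : HasDerivAt (fun t : ℝ => 1 + Real.exp (-t)) (-Real.exp (-t)) t := h1.const_add 1
  have h3 := (h2.log (ne_of_gt (aux_pos t))).neg
  simp only [neg_div, neg_neg] at h3
  exact h3

lemma hFaux' (t : ℝ) : HasDerivAt Faux' (Faux'' t) t := by
  have h1 : HasDerivAt (fun t : ℝ => Real.exp (-t)) (-Real.exp (-t)) t := by
    have := (Real.hasDerivAt_exp (-t)).comp t (hasDerivAt_neg t)
    simp only [mul_neg, mul_one] at this
    exact this
  have h2 : HasDerivAt (fun t : ℝ => 1 + Real.exp (-t)) (-Real.exp (-t)) t := h1.const_add 1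
  have h3 := h1.div h2 (ne_of_gt (aux_pos t))
  have he := Real.exp_pos (-t)
  refine h3.congr_deriv ?_
  unfold Faux''
  field_simp
  ring

lemma Faux'_bd (t : ℝ) : |Faux' t| ≤ 1 := by
  have he := Real.exp_pos (-t)
  have hp := aux_pos t
  rw [abs_le]
  constructor
  · have : 0 ≤ Faux' t := div_nonneg he.le hp.le
    linarith
  · unfold Faux'
    rw [div_le_one hp]
    linarith

lemma Faux''_bd (t : ℝ) : |Faux'' t| ≤ 1 / 4 := by
  have he := Real.exp_pos (-t)
  have hp : (0:ℝ) < (1 + Real.exp (-t)) ^ 2 := by positivity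
  rw [abs_le]
  unfold Faux''
  constructor
  · rw [neg_div, neg_le_neg_iff, div_le_iff₀ hp]
    nlinarith [sq_nonneg (1 - Real.exp (-t))]
  · have : -(Real.exp (-t)) / (1 + Real.exp (-t)) ^ 2 ≤ 0 := by
      apply div_nonpos_of_nonpos_of_nonneg <;> nlinarith
    linarith

theorem stmt17 (ε : ℝ) (hε : 0 < ε) (hε1 : ε ≤ 1) :
    ContDiff ℝ 2 (gEps ε) ∧
    ∀ x : ℝ, |deriv (gEps ε) x| ≤ 2 ∧ |deriv (deriv (gEps ε)) x| ≤ 3 := by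
  set r : ℝ := Real.sqrt ε with hrdef
  have hr : 0 < r := Real.sqrt_pos.mpr hε
  have hr2 : r ^ 2 = ε := Real.sq_sqrt hε.le
  have hr1 : r ≤ 1 := by nlinarith
  set s : ℝ → ℝ := fun x => 2 * ε * Real.sin (x / r) with hsdef
  set s1 : ℝ → ℝ := fun x => 2 * r * Real.cos (x / r) with hs1def
  set s2 : ℝ → ℝ := fun x => -(2 * Real.sin (x / r)) with hs2def
  have hgeq : gEps ε = fun x => Faux (s x) := by
    funext x
    simp [gEps, logistic, Faux, Real.log_inv, hsdef, ← hrdef]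
  -- derivatives of s
  have hs : ∀ x, HasDerivAt s (s1 x) x := by
    intro x
    have h := ((Real.hasDerivAt_sin (x / r)).comp x
      ((hasDerivAt_id x).div_const r)).const_mul (2 * ε)
    refine h.congr_deriv ?_
    simp only [hs1def]
    field_simp [← hr2]
    rw [hr2]
  have hs1 : ∀ x, HasDerivAt s1 (s2 x) x := by
    intro x
    have h := ((Real.hasDerivAt_cos (x / r)).comp x
      ((hasDerivAt_id x).div_const r)).const_mul (2 * r)
    refine h.congr_deriv ?_
    simp only [hs2def]
    field_simp
  -- first derivative of gEps
  have hg : ∀ x, HasDerivAt (gEps ε) (Faux' (s x) * s1 x) x := by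
    intro x
    rw [hgeq]
    exact (hFaux (s x)).comp x (hs x)
  have hderiv1 : deriv (gEps ε) = fun x => Faux' (s x) * s1 x := by
    funext x; exact (hg x).deriv
  -- second derivative
  have hg1 : ∀ x, HasDerivAt (fun x => Faux' (s x) * s1 x)
      (Faux'' (s x) * s1 x * s1 x + Faux' (s x) * s2 x) x := by
    intro x
    exact ((hFaux' (s x)).comp x (hs x)).mul (hs1 x)
  have hderiv2 : ∀ x, deriv (deriv (gEps ε)) x
      = Faux'' (s x) * s1 x * s1 x + Faux' (s x) * s2 x := by
    intro x
    rw [hderiv1]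
    exact (hg1 x).deriv
  -- bounds on s1, s2
  have hbs1 : ∀ x, |s1 x| ≤ 2 * r := by
    intro x
    simp only [hs1def]
    rw [abs_mul]
    calc |2 * r| * |Real.cos (x / r)| ≤ |2 * r| * 1 := by
          gcongr; exact Real.abs_cos_le_one _
      _ = 2 * r := by rw [mul_one, abs_of_pos (by linarith)]
  have hbs2 : ∀ x, |s2 x| ≤ 2 := by
    intro x
    simp only [hs2def, abs_neg, abs_mul]
    calc |(2:ℝ)| * |Real.sin (x / r)| ≤ |(2:ℝ)| * 1 := by
          gcongr; exact Real.abs_sin_le_one _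
      _ = 2 := by norm_num
  constructor
  · rw [hgeq]
    have hF_cd : ContDiff ℝ 2 Faux := by
      have : ContDiff ℝ 2 (fun t : ℝ => 1 + Real.exp (-t)) :=
        contDiff_const.add (Real.contDiff_exp.comp contDiff_neg)
      exact (this.log (fun t => ne_of_gt (aux_pos t))).neg
    have hs_cd : ContDiff ℝ 2 s :=
      contDiff_const.mul (Real.contDiff_sin.comp (contDiff_id.div_const r))
    exact hF_cd.comp hs_cd
  · intro x
    constructor
    · rw [hderiv1]
      calc |Faux' (s x) * s1 x| = |Faux' (s x)| * |s1 x| := abs_mul _ _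
        _ ≤ 1 * (2 * r) := by
            gcongr
            · exact Faux'_bd _
            · exact hbs1 x
        _ ≤ 2 := by linarith
    · rw [hderiv2 x]
      have h1 : |Faux'' (s x) * s1 x * s1 x| ≤ 1 / 4 * (2 * r) * (2 * r) := by
        rw [abs_mul, abs_mul]
        gcongr
        · exact Faux''_bd _
        · exact hbs1 x
        · exact hbs1 x
      have h2 : |Faux' (s x) * s2 x| ≤ 1 * 2 := by
        rw [abs_mul]
        gcongr
        · exact Faux'_bd _
        · exact hbs2 x
      calc |Faux'' (s x) * s1 x * s1 x + Faux' (s x) * s2 x|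
          ≤ |Faux'' (s x) * s1 x * s1 x| + |Faux' (s x) * s2 x| := abs_add_le _ _
        _ ≤ 1 / 4 * (2 * r) * (2 * r) + 1 * 2 := by linarith
        _ ≤ 3 := by nlinarith
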